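/- Let ψ̂, φ̂ be real numbers with ψ̂ > 1 and φ̂ < 0, let c > 0, and define H(z) = (ψ̂/(ψ̂ − φ̂))(z/c)^{φ̂} − (φ̂/(ψ̂ − φ̂))(z/c)^{ψ̂} for z > 0. Then the equation H(z) = z·H′(z) has exactly one solution z ∈ (0, ∞), namely z = l·c, where l = (ψ̂(1 − φ̂)/(φ̂(1 − ψ̂)))^{1/(ψ̂ − φ̂)}. -/

import Mathlib

open Real

/-- For `ψ̂ > 1`, `φ̂ < 0`, `c > 0` and
`H(z) = (ψ̂/(ψ̂ − φ̂))(z/c)^{φ̂} − (φ̂/(ψ̂ − φ̂))(z/c)^{ψ̂}`, the equation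
`H(z) = z·H′(z)` has exactly one solution in `(0, ∞)`, namely `z = l·c` with
`l = (ψ̂(1 − φ̂)/(φ̂(1 − ψ̂)))^{1/(ψ̂ − φ̂)}`. -/
theorem tangency_point_unique (ψ φ c : ℝ) (hψ : 1 < ψ) (hφ : φ < 0) (hc : 0 < c)
    (l : ℝ) (hl : l = (ψ * (1 - φ) / (φ * (1 - ψ))) ^ (1 / (ψ - φ)))
    (H : ℝ → ℝ)
    (hH : H = fun z : ℝ => ψ / (ψ - φ) * (z / c) ^ φ - φ / (ψ - φ) * (z / c) ^ ψ) :
    ∀ z : ℝ, 0 < z → (H z = z * deriv H z ↔ z = l * c) := by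
  intro z hz
  have hψφ : 0 < ψ - φ := by linarith
  have hx : 0 < z / c := div_pos hz hc
  have hr : (0:ℝ) < ψ * (1 - φ) / (φ * (1 - ψ)) := by
    apply div_pos
    · nlinarith
    · nlinarith
  -- derivative
  have h1 : HasDerivAt (fun w : ℝ => w / c) (1 / c) z := by
    simpa using (hasDerivAt_id z).div_const c
  have hdφ : HasDerivAt (fun w : ℝ => (w / c) ^ φ)
      (φ * (z / c) ^ (φ - 1) * (1 / c)) z :=
    by have := (Real.hasDerivAt_rpow_const (p := φ) (x := z / c) (Or.inl hx.ne')).comp z h1; exact this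
  have hdψ : HasDerivAt (fun w : ℝ => (w / c) ^ ψ)
      (ψ * (z / c) ^ (ψ - 1) * (1 / c)) z :=
    by have := (Real.hasDerivAt_rpow_const (p := ψ) (x := z / c) (Or.inl hx.ne')).comp z h1; exact this
  have hd : HasDerivAt H
      (ψ / (ψ - φ) * (φ * (z / c) ^ (φ - 1) * (1 / c))
        - φ / (ψ - φ) * (ψ * (z / c) ^ (ψ - 1) * (1 / c))) z := by
    rw [hH]
    exact (hdφ.const_mul _).sub (hdψ.const_mul _)
  have hderiv := hd.deriv
  have hP : (0:ℝ) < (z / c) ^ φ := rpow_pos_of_pos hx φ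
  have hQ : (0:ℝ) < (z / c) ^ ψ := rpow_pos_of_pos hx ψ
  have key : (z / c) ^ (ψ - φ) = (z / c) ^ ψ / (z / c) ^ φ := Real.rpow_sub hx ψ φ
  have hzd : z * deriv H z = ψ * φ / (ψ - φ) * ((z / c) ^ φ - (z / c) ^ ψ) := by
    rw [hderiv, Real.rpow_sub hx φ 1, Real.rpow_sub hx ψ 1, Real.rpow_one]
    field_simp
  have hden : (0:ℝ) < φ * (1 - ψ) := by nlinarith
  have step1 : (H z = z * deriv H z) ↔
      (z / c) ^ (ψ - φ) = ψ * (1 - φ) / (φ * (1 - ψ)) := by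
    rw [hzd, hH, key, div_eq_div_iff hP.ne' hden.ne']
    simp only
    constructor
    · intro h
      field_simp at h
      linear_combination -h
    · intro h
      field_simp
      linear_combination -h
  have step2 : ((z / c) ^ (ψ - φ) = ψ * (1 - φ) / (φ * (1 - ψ))) ↔ z = l * c := by
    constructor
    · intro h
      have : ((z / c) ^ (ψ - φ)) ^ (ψ - φ)⁻¹ = z / c :=
        Real.rpow_rpow_inv hx.le hψφ.ne'
      rw [h] at this
      rw [hl, one_div, this]
      field_simp
    · intro h
      have hzc : z / c = l := by rw [h]; field_simp
      rw [hzc, hl, one_div]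
      exact Real.rpow_inv_rpow hr.le hψφ.ne'
  rw [step1, step2]
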